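/- Let A be a commutative ring, M an A-module with countable basis (βₙ)_{n ≥ 1}, and let M* = Hom_A(M, A). Then the natural evaluation map M → Hom^{cts}_A(M*, A) is an isomorphism of A-modules, where M* is given the product topology via the identification M* ≅ ∏_{n≥1} A (sending a functional f to the sequence (f(βₙ))), and Hom^{cts} denotes A-linear maps M* → A that factor through a finite sub-product, i.e. depend on only finitely many coordinates. -/

import Mathlib

/-- Let `M` be an `A`-module with countable basis `(bₙ)` and `M* = Hom_A(M, A)`.
Call a functional `φ : M* → A` continuous if it depends on only finitely many
coordinates of `M* ≅ ∏ₙ A` (i.e. `∃ N, φ f = 0` whenever `f(bₙ) = 0` for all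
`n < N`).  Then the evaluation map `m ↦ ev_m : M → Hom^{cts}_A(M*, A)` is an
isomorphism: each `ev_m` is continuous, the map is injective, and every continuous
functional on `M*` is an evaluation. -/
theorem stmt_15 {A M : Type*} [CommRing A] [AddCommGroup M] [Module A M]
    (b : Module.Basis ℕ A M) :
    (∀ m : M, ∃ N : ℕ, ∀ f : M →ₗ[A] A, (∀ n < N, f (b n) = 0) → f m = 0) ∧
    (∀ m m' : M, (∀ f : M →ₗ[A] A, f m = f m') → m = m') ∧
    (∀ φ : (M →ₗ[A] A) →ₗ[A] A,
      (∃ N : ℕ, ∀ f : M →ₗ[A] A, (∀ n < N, f (b n) = 0) → φ f = 0) →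
      ∃ m : M, ∀ f : M →ₗ[A] A, φ f = f m) := by
  refine ⟨?_, ?_, ?_⟩
  · intro m
    refine ⟨((b.repr m).support.sup id) + 1, fun f hf => ?_⟩
    conv_lhs => rw [← b.linearCombination_repr m, Finsupp.linearCombination_apply]
    rw [map_finsuppSum]
    exact Finset.sum_eq_zero fun n hn => by
      simp only []
      rw [map_smul, hf n (Nat.lt_succ_of_le (Finset.le_sup (f := id) hn)), smul_zero]
  · intro m m' h
    apply b.repr.injective
    ext n
    simpa [Module.Basis.coord_apply] using h (b.coord n)
  · rintro φ ⟨N, hN⟩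
    refine ⟨∑ n ∈ Finset.range N, φ (b.coord n) • b n, fun f => ?_⟩
    have key : φ (f - ∑ n ∈ Finset.range N, f (b n) • b.coord n) = 0 := by
      apply hN
      intro k hk
      simp only [LinearMap.sub_apply, LinearMap.coe_sum, Finset.sum_apply,
        LinearMap.smul_apply, Module.Basis.coord_apply, Module.Basis.repr_self, smul_eq_mul,
        Finsupp.single_apply]
      rw [Finset.sum_congr rfl (fun n _ => by rw [mul_ite, mul_one, mul_zero]),
        Finset.sum_ite_eq (Finset.range N) k (fun n => f (b n)),
        if_pos (Finset.mem_range.mpr hk), sub_self]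
    rw [map_sub, map_sum, sub_eq_zero] at key
    rw [key, map_sum]
    simp [mul_comm]
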